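/- Let x, p ∈ ℝ³ and set y = −x. Define ξ(x,p) ∈ ℝ⁴ by ξᵢ = ((|p|²+1)/2)·yᵢ − (y·p)·pᵢ for i = 1,2,3 and ξ₄ = y·p. Then ‖ξ(x,p)‖ = ((|p|²+1)/2)·|x|. Consequently, if x ≠ 0 and |p|²/2 − 1/|x| = −1/2, then ‖ξ(x,p)‖ = 1; that is, the Moser map sends the energy surface Σ(−1/2) into the unit cotangent bundle of the 3-sphere. -/
import Mathlib


/-- `|p|²` on `Fin 3 → ℝ`. -/
noncomputable def normSq3 (p : Fin 3 → ℝ) : ℝ := p 0 ^ 2 + p 1 ^ 2 + p 2 ^ 2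

/-- Euclidean dot product on `Fin 3 → ℝ`. -/
noncomputable def dot3 (x p : Fin 3 → ℝ) : ℝ := x 0 * p 0 + x 1 * p 1 + x 2 * p 2

/-- Euclidean norm on `Fin 3 → ℝ`. -/
noncomputable def norm3 (x : Fin 3 → ℝ) : ℝ := Real.sqrt (dot3 x x)

/-- Euclidean norm on `Fin 4 → ℝ`. -/
noncomputable def norm4 (x : Fin 4 → ℝ) : ℝ :=
  Real.sqrt (x 0 ^ 2 + x 1 ^ 2 + x 2 ^ 2 + x 3 ^ 2)

/-- The `ξ`-component of the Moser map: with `y = −x`,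
`ξᵢ = ((|p|²+1)/2)yᵢ − (y·p)pᵢ` for `i = 1,2,3` and `ξ₄ = y·p`. -/
noncomputable def moserXi (x p : Fin 3 → ℝ) : Fin 4 → ℝ :=
  ![(normSq3 p + 1) / 2 * (-x) 0 - dot3 (-x) p * p 0,
    (normSq3 p + 1) / 2 * (-x) 1 - dot3 (-x) p * p 1,
    (normSq3 p + 1) / 2 * (-x) 2 - dot3 (-x) p * p 2,
    dot3 (-x) p]

/-- `‖ξ(x,p)‖ = ((|p|²+1)/2)|x|`; consequently on the energy surface
`Σ(−1/2)` one has `‖ξ(x,p)‖ = 1`. -/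
theorem stmt6 (x p : Fin 3 → ℝ) :
    norm4 (moserXi x p) = (normSq3 p + 1) / 2 * norm3 x ∧
    (x ≠ 0 → normSq3 p / 2 - 1 / norm3 x = -(1/2) → norm4 (moserXi x p) = 1) := by
  have key : norm4 (moserXi x p) = (normSq3 p + 1) / 2 * norm3 x := by
    have h1 : (moserXi x p) 0 ^ 2 + (moserXi x p) 1 ^ 2 + (moserXi x p) 2 ^ 2 +
        (moserXi x p) 3 ^ 2 = ((normSq3 p + 1) / 2) ^ 2 * dot3 x x := by
      have e0 : (moserXi x p) 0 = (normSq3 p + 1) / 2 * (-x) 0 - dot3 (-x) p * p 0 := rfl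
      have e1 : (moserXi x p) 1 = (normSq3 p + 1) / 2 * (-x) 1 - dot3 (-x) p * p 1 := rfl
      have e2 : (moserXi x p) 2 = (normSq3 p + 1) / 2 * (-x) 2 - dot3 (-x) p * p 2 := rfl
      have e3 : (moserXi x p) 3 = dot3 (-x) p := rfl
      rw [e0, e1, e2, e3]
      simp only [normSq3, dot3, Pi.neg_apply]
      ring
    have ha : 0 ≤ (normSq3 p + 1) / 2 := by
      have : 0 ≤ normSq3 p := by simp only [normSq3]; positivity
      linarith
    rw [norm4, h1, Real.sqrt_mul (sq_nonneg _), Real.sqrt_sq ha, norm3]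
  refine ⟨key, fun hx henergy => ?_⟩
  have hd : 0 < dot3 x x := by
    have hcases : x 0 ≠ 0 ∨ x 1 ≠ 0 ∨ x 2 ≠ 0 := by
      by_contra h
      push_neg at h
      exact hx (funext fun i => by fin_cases i <;> simp [h.1, h.2.1, h.2.2])
    have h0 := sq_nonneg (x 0); have h1 := sq_nonneg (x 1); have h2 := sq_nonneg (x 2)
    rcases hcases with h | h | h <;>
      · have := pow_pos (abs_pos.mpr h) 2
        rw [sq_abs] at this
        simp only [dot3]
        nlinarith
  have hn : 0 < norm3 x := Real.sqrt_pos.mpr hd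
  have h2 : 1 / norm3 x = (normSq3 p + 1) / 2 := by linarith
  rw [key, ← h2]
  field_simp
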